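/- Let W ~ N_p(0, σ²C⁻¹), C symmetric positive definite, H q×p of rank q, ξ ∈ ℝ^q, δ = C⁻¹Hᵀ(HC⁻¹Hᵀ)⁻¹ξ, A = C⁻¹ − C⁻¹Hᵀ(HC⁻¹Hᵀ)⁻¹HC⁻¹. Then W^(2) = W − C⁻¹Hᵀ(HC⁻¹Hᵀ)⁻¹(HW + ξ) is Gaussian with mean −δ and covariance σ²A. -/

import Mathlib

open MeasureTheory ProbabilityTheory Matrix

/-- Standard Gaussian measure on `Fin n → ℝ`. -/
noncomputable def stdGaussian (n : ℕ) : Measure (Fin n → ℝ) :=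
  Measure.pi fun _ => gaussianReal 0 1

/-- Multivariate Gaussian measure on `Fin n → ℝ` with mean `m` and covariance
factor `B` (covariance matrix `B * Bᵀ`): the law of `m + B z` for standard Gaussian `z`. -/
noncomputable def multiGaussian {n : ℕ} (m : Fin n → ℝ) (B : Matrix (Fin n) (Fin n) ℝ) :
    Measure (Fin n → ℝ) :=
  (stdGaussian n).map (fun z => m + B.mulVec z)

/-- Noncentral chi-square distribution with `ν` degrees of freedom and
noncentrality parameter `t ≥ 0`: the law of `‖z + μ‖²` where `z` is standard Gaussian
in dimension `ν` and `μ` is a fixed vector with `‖μ‖² = t`. -/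
noncomputable def ncChiSq (ν : ℕ) (t : ℝ) : Measure ℝ :=
  (stdGaussian ν).map (fun z => ∑ i, (z i + if i.val = 0 then Real.sqrt t else 0) ^ 2)

/-- Central chi-square distribution with `ν` degrees of freedom. -/
noncomputable def chiSq (ν : ℕ) : Measure ℝ := ncChiSq ν 0

/-- cdf of the central chi-square with `ν` degrees of freedom. -/
noncomputable def chiSqCDF (ν : ℕ) (c : ℝ) : ℝ := (chiSq ν (Set.Iic c)).toReal

/-- cdf of the noncentral chi-square with `ν` d.f. and noncentrality `t`. -/
noncomputable def ncChiSqCDF (ν : ℕ) (c t : ℝ) : ℝ := (ncChiSq ν t (Set.Iic c)).toReal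

theorem restricted_estimator_gaussian {p q : ℕ} (hqp : q ≤ p)
    {Ω : Type*} [MeasurableSpace Ω] (P : Measure Ω) [IsProbabilityMeasure P]
    (σ : ℝ) (hσ : 0 < σ)
    (C : Matrix (Fin p) (Fin p) ℝ) (hC : C.PosDef) (hCsymm : C.IsSymm)
    (H : Matrix (Fin q) (Fin p) ℝ) (hH : H.rank = q) (ξ : Fin q → ℝ)
    (W : Ω → Fin p → ℝ) (hWmeas : Measurable W)
    (B : Matrix (Fin p) (Fin p) ℝ) (hB : B * Bᵀ = (σ ^ 2) • C⁻¹)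
    (hW : Measure.map W P = multiGaussian 0 B) :
    ∃ B' : Matrix (Fin p) (Fin p) ℝ,
      B' * B'ᵀ = (σ ^ 2) • (C⁻¹ - C⁻¹ * Hᵀ * (H * C⁻¹ * Hᵀ)⁻¹ * H * C⁻¹) ∧
      Measure.map
          (fun ω => W ω - (C⁻¹ * Hᵀ * (H * C⁻¹ * Hᵀ)⁻¹).mulVec (H.mulVec (W ω) + ξ)) P
        = multiGaussian (-(C⁻¹ * Hᵀ * (H * C⁻¹ * Hᵀ)⁻¹).mulVec ξ) B' := by
  classical
  have hCi : (C⁻¹).PosDef := hC.inv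
  have hCisymm : (C⁻¹)ᵀ = C⁻¹ := by
    rw [transpose_nonsing_inv, hCsymm.eq]
  -- injectivity of Hᵀ *ᵥ
  have hinj : Function.Injective (Hᵀ.mulVec) := by
    have h1 : Hᵀ.rank = q := by rw [rank_transpose, hH]
    have h2 := Hᵀ.mulVecLin.finrank_range_add_finrank_ker
    rw [Module.finrank_fin_fun] at h2
    have hker : LinearMap.ker Hᵀ.mulVecLin = ⊥ := by
      apply Submodule.finrank_eq_zero.mp
      have : Hᵀ.rank + Module.finrank ℝ (LinearMap.ker Hᵀ.mulVecLin) = q := h2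
      omega
    have := LinearMap.ker_eq_bot.mp hker
    exact this
  set S : Matrix (Fin q) (Fin q) ℝ := H * C⁻¹ * Hᵀ with hSdef
  have hSsymm : Sᵀ = S := by
    rw [hSdef, transpose_mul, transpose_mul, transpose_transpose, hCisymm]
    exact (Matrix.mul_assoc H C⁻¹ Hᵀ).symm
  have hS : S.PosDef := by
    refine Matrix.PosDef.of_dotProduct_mulVec_pos ?_ fun x hx => ?_
    · simpa [Matrix.IsSymm] using hSsymm
    · have hy : Hᵀ.mulVec x ≠ 0 := by
        intro h
        exact hx (hinj (by simpa using h))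
      have := hCi.dotProduct_mulVec_pos hy
      rw [star_trivial] at this ⊢
      calc 0 < (Hᵀ *ᵥ x) ⬝ᵥ C⁻¹ *ᵥ (Hᵀ *ᵥ x) := by simpa using this
        _ = x ⬝ᵥ S *ᵥ x := by
            rw [hSdef, ← mulVec_mulVec, ← mulVec_mulVec, dotProduct_mulVec x H,
              ← mulVec_transpose]
  have hSiS : S⁻¹ * S = 1 := Matrix.nonsing_inv_mul S hS.det_pos.ne'.isUnit
  have hSisymm : (S⁻¹)ᵀ = S⁻¹ := by rw [transpose_nonsing_inv, hSsymm]
  set M : Matrix (Fin p) (Fin q) ℝ := C⁻¹ * Hᵀ * S⁻¹ with hMdef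
  set L : Matrix (Fin p) (Fin p) ℝ := 1 - M * H with hLdef
  have hMT : Mᵀ = S⁻¹ * (H * C⁻¹) := by
    rw [hMdef, transpose_mul, transpose_mul, transpose_transpose, hCisymm, hSisymm]
  have hc : ∀ {k : Type} [Fintype k] (X : Matrix (Fin q) k ℝ),
      S⁻¹ * (H * (C⁻¹ * (Hᵀ * X))) = X := by
    intro k _ X
    calc S⁻¹ * (H * (C⁻¹ * (Hᵀ * X))) = (S⁻¹ * (H * C⁻¹ * Hᵀ)) * X := by
          simp only [Matrix.mul_assoc]
      _ = X := by rw [← hSdef, hSiS, Matrix.one_mul]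
  have hLCL : L * C⁻¹ * Lᵀ = C⁻¹ - C⁻¹ * Hᵀ * S⁻¹ * H * C⁻¹ := by
    rw [hLdef, transpose_sub, transpose_one, transpose_mul, hMT, hMdef]
    simp only [Matrix.sub_mul, Matrix.mul_sub, Matrix.one_mul, Matrix.mul_one,
      Matrix.mul_assoc, hc]
    abel
  -- measurability of matrix-vector multiplication
  have hmv : ∀ {a b : ℕ} (A : Matrix (Fin a) (Fin b) ℝ), Measurable (A.mulVec) := by
    intro a b A
    have : Continuous (A.mulVecLin) := LinearMap.continuous_of_finiteDimensional _
    exact this.measurable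
  refine ⟨L * B, ?_, ?_⟩
  · calc (L * B) * (L * B)ᵀ = L * (B * Bᵀ) * Lᵀ := by
          rw [transpose_mul]; simp only [Matrix.mul_assoc]
      _ = (σ ^ 2) • (L * C⁻¹ * Lᵀ) := by
          rw [hB, Matrix.mul_smul, Matrix.smul_mul]
      _ = _ := by rw [hLCL]
  · have hg : Measurable fun w : Fin p → ℝ => w - M.mulVec (H.mulVec w + ξ) :=
      measurable_id.sub ((hmv M).comp ((hmv H).add measurable_const))
    have hg0 : Measurable fun z : Fin p → ℝ => (0 : Fin p → ℝ) + B.mulVec z :=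
      measurable_const.add (hmv B)
    have h1 : (fun ω => W ω - M *ᵥ (H *ᵥ W ω + ξ))
        = (fun w : Fin p → ℝ => w - M *ᵥ (H *ᵥ w + ξ)) ∘ W := rfl
    rw [h1, ← Measure.map_map hg hWmeas, hW]
    unfold multiGaussian
    rw [Measure.map_map hg hg0]
    congr 1
    funext z
    simp only [Function.comp_apply, zero_add, hLdef]
    simp only [Matrix.sub_mul, Matrix.one_mul, sub_mulVec, mulVec_add, mulVec_mulVec,
      Matrix.mul_assoc]
    abel
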